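/- Let M be a {0,1}-matrix with k = 1 diagonal zero and ℓ diagonal ones, and D a minimal M-obstruction. If D contains a pair of true twins, then |V(D)| ≤ 2(ℓ+1). -/

import Mathlib

variable {V : Type*}

/-- `w` distinguishes distinct vertices `u` and `v`: exactly one of `u,v` is an
in-neighbour of `w`, or exactly one of `u,v` is an out-neighbour of `w`. -/
def Distinguishes (A : V → V → Prop) (w u v : V) : Prop :=
  w ≠ u ∧ w ≠ v ∧
    ((A u w ∧ ¬ A v w) ∨ (A v w ∧ ¬ A u w) ∨ (A w u ∧ ¬ A w v) ∨ (A w v ∧ ¬ A w u))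

/-- `u,v` are false twins in the induced subdigraph on `U`. -/
def FalseTwinsOn (A : V → V → Prop) (U : Set V) (u v : V) : Prop :=
  u ∈ U ∧ v ∈ U ∧ u ≠ v ∧ ¬ A u v ∧ ¬ A v u ∧ ∀ w ∈ U, ¬ Distinguishes A w u v

/-- `u,v` are true twins in the induced subdigraph on `U`. -/
def TrueTwinsOn (A : V → V → Prop) (U : Set V) (u v : V) : Prop :=
  u ∈ U ∧ v ∈ U ∧ u ≠ v ∧ A u v ∧ A v u ∧ ∀ w ∈ U, ¬ Distinguishes A w u v

/-- The induced subdigraph on `U` is point-determining: no pair of false twins. -/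
def PointDeterminingOn (A : V → V → Prop) (U : Set V) : Prop :=
  ∀ u v, ¬ FalseTwinsOn A U u v

/-- A triple `(x, {y,z})`: `x,y,z` are pairwise distinct and `y,z` are false
twins in `D - x`. `x` is the red vertex, `y,z` are the green vertices. -/
def IsTriple (A : V → V → Prop) (x y z : V) : Prop :=
  x ≠ y ∧ x ≠ z ∧ y ≠ z ∧ FalseTwinsOn A {x}ᶜ y z

/-- `S` is a homogeneous set: any two of its vertices are twins. -/
def Homogeneous (A : V → V → Prop) (S : Set V) : Prop :=
  ∀ u ∈ S, ∀ v ∈ S, u ≠ v → ∀ w, ¬ Distinguishes A w u v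

/-- `S` is a strong clique: arcs in both directions between any two distinct members. -/
def StrongClique (A : V → V → Prop) (S : Set V) : Prop :=
  ∀ u ∈ S, ∀ v ∈ S, u ≠ v → A u v ∧ A v u

/-- `S` is an independent set: no arcs between any two distinct members. -/
def IndepSet (A : V → V → Prop) (S : Set V) : Prop :=
  ∀ u ∈ S, ∀ v ∈ S, u ≠ v → ¬ A u v

/-- `P` is an `M`-partition of the induced subdigraph on `U`: the parts `P i`
partition `U`, a part with `M i i = 0` is independent, a part with `M i i = 1`
is a strong clique, and for `i ≠ j` all arcs from `P i` to `P j` are present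
iff `M i j = 1`. -/
def IsMPartitionOn (A : V → V → Prop) {n : ℕ} (M : Fin n → Fin n → Bool)
    (U : Set V) (P : Fin n → Set V) : Prop :=
  (∀ i, P i ⊆ U) ∧ (∀ v ∈ U, ∃! i, v ∈ P i) ∧
    ∀ i j, ∀ u ∈ P i, ∀ v ∈ P j, u ≠ v → (A u v ↔ M i j = true)

def HasMPartitionOn (A : V → V → Prop) {n : ℕ} (M : Fin n → Fin n → Bool)
    (U : Set V) : Prop :=
  ∃ P, IsMPartitionOn A M U P

/-- `D` is a minimal `M`-obstruction: it admits no `M`-partition, but every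
one-vertex-deleted induced subdigraph does. -/
def MinimalObstruction (A : V → V → Prop) {n : ℕ} (M : Fin n → Fin n → Bool) : Prop :=
  ¬ HasMPartitionOn A M Set.univ ∧ ∀ v : V, HasMPartitionOn A M {v}ᶜ
set_option linter.unusedSectionVars false
section Aux

variable {V : Type*} [Fintype V] [DecidableEq V] {l : ℕ} {A : V → V → Prop}
  {M : Fin (1 + l) → Fin (1 + l) → Bool}

instance : NeZero (1 + l) := ⟨by omega⟩

/-- true twins in the whole digraph, in convenient form -/
def TTw (A : V → V → Prop) (a b : V) : Prop :=
  a ≠ b ∧ A a b ∧ A b a ∧ ∀ t, t ≠ a → t ≠ b → ((A a t ↔ A b t) ∧ (A t a ↔ A t b))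

lemma TTw.symm {a b : V} (h : TTw A a b) : TTw A b a := by
  obtain ⟨h1, h2, h3, h4⟩ := h
  exact ⟨h1.symm, h3, h2, fun t ht1 ht2 => ⟨(h4 t ht2 ht1).1.symm, (h4 t ht2 ht1).2.symm⟩⟩

lemma ttw_of_trueTwinsOn {u v : V} (h : TrueTwinsOn A Set.univ u v) : TTw A u v := by
  obtain ⟨-, -, hne, hab, hba, hnd⟩ := h
  refine ⟨hne, hab, hba, fun t ht1 ht2 => ?_⟩
  have := hnd t (Set.mem_univ t)
  unfold Distinguishes at this
  push_neg at this
  have h' := this ht1 ht2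
  constructor <;> constructor <;> intro hh <;> by_contra hc <;> tauto

/-- adding `x` to part `c` of an M-partition of `{x}ᶜ` yields an M-partition of
everything, provided `x` is compatible with part `c`. -/
lemma extend_contra {x : V} {P : Fin (1 + l) → Set V}
    (hobs1 : ¬ HasMPartitionOn A M Set.univ)
    (hP : IsMPartitionOn A M ({x}ᶜ) P) (c : Fin (1 + l))
    (hc : ∀ j, ∀ t ∈ P j, (A x t ↔ M c j = true) ∧ (A t x ↔ M j c = true)) : False := by
  obtain ⟨hsub, huniq, hcross⟩ := hP
  have hxnot : ∀ j, x ∉ P j := by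
    intro j hx
    exact (hsub j hx) rfl
  apply hobs1
  refine ⟨fun i => if i = c then P i ∪ {x} else P i, fun i => Set.subset_univ _, ?_, ?_⟩
  · intro t _
    by_cases htx : t = x
    · subst htx
      refine ⟨c, by simp, ?_⟩
      intro j hj
      by_contra hjc
      simp only [hjc, if_neg] at hj
      exact hxnot j hj
    · obtain ⟨i, hi, hiu⟩ := huniq t (by simpa using htx)
      refine ⟨i, ?_, ?_⟩
      · by_cases hic : i = c
        · subst hic; simp only [if_pos rfl]; exact Or.inl hi
        · simp only [if_neg hic]; exact hi
      · intro j hj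
        by_cases hjc : j = c
        · subst hjc
          simp only [if_pos rfl, Set.mem_union, Set.mem_singleton_iff] at hj
          rcases hj with hj | hj
          · exact hiu _ hj
          · exact absurd hj htx
        · simp only [if_neg hjc] at hj
          exact hiu _ hj
  · intro i j a ha b hb hne
    have hmem : ∀ k (t : V), t ∈ (if k = c then P k ∪ {x} else P k) → t = x ∨ t ∈ P k := by
      intro k t ht
      by_cases hkc : k = c
      · simp only [if_pos hkc, Set.mem_union, Set.mem_singleton_iff] at ht
        tauto
      · simp only [if_neg hkc] at ht
        exact Or.inr ht
    rcases hmem i a ha with hax | hax <;> rcases hmem j b hb with hbx | hbx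
    · exact absurd (hax.trans hbx.symm) hne
    · subst hax
      have hic : i = c := by
        by_contra hic
        simp only [if_neg hic] at ha
        exact hxnot i ha
      subst hic
      exact (hc j b hbx).1
    · subst hbx
      have hjc : j = c := by
        by_contra hjc
        simp only [if_neg hjc] at hb
        exact hxnot j hb
      subst hjc
      exact (hc i a hax).2
    · exact hcross i j a hax b hbx hne

/-- F2 : if `a,b` are true twins in `D` then in every M-partition of `D - b`,
the vertex `a` lies in part `0`. -/
lemma mem_part_zero (hdiag : ∀ i : Fin (1 + l), M i i = true ↔ 1 ≤ (i : ℕ))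
    (hobs1 : ¬ HasMPartitionOn A M Set.univ)
    {a b : V} (hab : TTw A a b) {P : Fin (1 + l) → Set V}
    (hP : IsMPartitionOn A M ({b}ᶜ) P) {c : Fin (1 + l)} (hc : a ∈ P c) : c = 0 := by
  by_contra hc0
  have hc1 : 1 ≤ (c : ℕ) := by
    rcases Nat.eq_zero_or_pos (c : ℕ) with h | h
    · exact absurd (Fin.ext h) hc0
    · exact h
  have hcc : M c c = true := (hdiag c).2 hc1
  refine extend_contra hobs1 hP c ?_
  intro j t ht
  have htb : t ≠ b := fun h => (hP.1 j ht) (by simp [h])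
  by_cases hta : t = a
  · subst hta
    have hjc : j = c := (hP.2.1 t (hP.1 j ht)).unique ht hc
    subst hjc
    simp only [hcc]
    exact ⟨iff_of_true hab.2.2.1 trivial, iff_of_true hab.2.1 trivial⟩
  · have hmim := hab.2.2.2 t hta htb
    have h1 := hP.2.2 c j a hc t ht (fun h => hta h.symm)
    have h2 := hP.2.2 j c t ht a hc hta
    exact ⟨hmim.1.symm.trans h1, hmim.2.symm.trans h2⟩

lemma Mii_true (hdiag : ∀ i : Fin (1 + l), M i i = true ↔ 1 ≤ (i : ℕ))
    {i : Fin (1 + l)} (hi0 : i ≠ 0) : M i i = true := by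
  refine (hdiag i).2 ?_
  have : (i : ℕ) ≠ 0 := by
    intro h
    exact hi0 (Fin.ext (by simp [h]))
  omega

lemma M00_false (hdiag : ∀ i : Fin (1 + l), M i i = true ↔ 1 ≤ (i : ℕ)) :
    M 0 0 = false := by
  have := hdiag 0
  simp only [Fin.val_zero] at this
  rcases Bool.eq_false_or_eq_true (M 0 0) with h | h
  · exact absurd (this.1 h) (by omega)
  · exact h

/-- members of part 0 are pairwise non-adjacent -/
lemma part0_indep (hdiag : ∀ i : Fin (1 + l), M i i = true ↔ 1 ≤ (i : ℕ))
    {U : Set V} {P : Fin (1 + l) → Set V} (hP : IsMPartitionOn A M U P)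
    {a b : V} (ha : a ∈ P 0) (hb : b ∈ P 0) (hne : a ≠ b) : ¬ A a b := by
  intro hA
  have := (hP.2.2 0 0 a ha b hb hne).1 hA
  rw [M00_false hdiag] at this
  exact absurd this (by simp)

/-- members of a nonzero part are pairwise adjacent in both directions -/
lemma part_clique (hdiag : ∀ i : Fin (1 + l), M i i = true ↔ 1 ≤ (i : ℕ))
    {U : Set V} {P : Fin (1 + l) → Set V} (hP : IsMPartitionOn A M U P)
    {i : Fin (1 + l)} (hi0 : i ≠ 0)
    {a b : V} (ha : a ∈ P i) (hb : b ∈ P i) (hne : a ≠ b) : A a b ∧ A b a :=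
  ⟨(hP.2.2 i i a ha b hb hne).2 (Mii_true hdiag hi0),
   (hP.2.2 i i b hb a ha hne.symm).2 (Mii_true hdiag hi0)⟩

/-- two members of the same part are related identically to any third vertex of `U` -/
lemma part_unif {x : V} {P : Fin (1 + l) → Set V} (hP : IsMPartitionOn A M ({x}ᶜ) P)
    {i : Fin (1 + l)} {a b : V} (ha : a ∈ P i) (hb : b ∈ P i)
    {t : V} (hta : t ≠ a) (htb : t ≠ b) (htx : t ≠ x) :
    (A t a ↔ A t b) ∧ (A a t ↔ A b t) := by
  obtain ⟨k, hk, -⟩ := hP.2.1 t (by simpa using htx)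
  exact ⟨(hP.2.2 k i t hk a ha hta).trans (hP.2.2 k i t hk b hb htb).symm,
    (hP.2.2 i k a ha t hk (fun h => hta h.symm)).trans
      (hP.2.2 i k b hb t hk (fun h => htb h.symm)).symm⟩

/-- two distinct members of a nonzero part of an M-partition of `D - x` are true
twins in `D`, provided `x` itself does not distinguish them. -/
lemma clique_pair_ttw (hdiag : ∀ i : Fin (1 + l), M i i = true ↔ 1 ≤ (i : ℕ))
    {x : V} {P : Fin (1 + l) → Set V} (hP : IsMPartitionOn A M ({x}ᶜ) P)
    {i : Fin (1 + l)} (hi0 : i ≠ 0)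
    {a b : V} (ha : a ∈ P i) (hb : b ∈ P i) (hne : a ≠ b)
    (hx : (A a x ↔ A b x) ∧ (A x a ↔ A x b)) : TTw A a b := by
  obtain ⟨hab, hba⟩ := part_clique hdiag hP hi0 ha hb hne
  refine ⟨hne, hab, hba, fun t hta htb => ?_⟩
  by_cases htx : t = x
  · subst htx
    exact ⟨hx.1, hx.2⟩
  · have h := part_unif hP ha hb (t := t) hta htb htx
    exact ⟨h.2, h.1⟩

/-- F4 : no three pairwise true twins -/
lemma no_three_ttw (hdiag : ∀ i : Fin (1 + l), M i i = true ↔ 1 ≤ (i : ℕ))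
    (hobs : MinimalObstruction A M)
    {a b c : V} (h1 : TTw A a b) (h2 : TTw A a c) (h3 : TTw A b c) : False := by
  obtain ⟨P, hP⟩ := hobs.2 c
  obtain ⟨i, hi, -⟩ := hP.2.1 a (by simpa using h2.1)
  obtain ⟨j, hj, -⟩ := hP.2.1 b (by simpa using h3.1)
  have hi0 : i = 0 := mem_part_zero hdiag hobs.1 h2 hP hi
  have hj0 : j = 0 := mem_part_zero hdiag hobs.1 h3 hP hj
  subst hi0; subst hj0
  exact part0_indep hdiag hP hi hj h1.1 h1.2.1

lemma partition_finsets {x : V} {P : Fin (1 + l) → Set V}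
    (hP : IsMPartitionOn A M ({x}ᶜ) P) :
    ∃ (F : Fin (1 + l) → Finset V) (g : V → Fin (1 + l)),
      (∀ i t, t ∈ F i ↔ t ∈ P i) ∧
      (∀ (t : V) i, t ∈ P i → g t = i) ∧
      ((∑ i, (F i).card) + 1 = Fintype.card V) ∧
      (∀ (X : Finset V) (J : Finset (Fin (1 + l))),
        (∑ i ∈ J, ((F i) ∩ X).card) ≤ X.card) := by
  classical
  have hgex : ∀ t : V, t ≠ x → ∃ i, t ∈ P i := by
    intro t ht
    obtain ⟨i, hi, -⟩ := hP.2.1 t (by simpa using ht)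
    exact ⟨i, hi⟩
  set g : V → Fin (1 + l) := fun t => if h : ∃ i, t ∈ P i then h.choose else 0 with hg
  have hgmem : ∀ t : V, t ≠ x → t ∈ P (g t) := by
    intro t ht
    simp only [hg, dif_pos (hgex t ht)]
    exact (hgex t ht).choose_spec
  have hguniq : ∀ (t : V) i, t ∈ P i → g t = i := by
    intro t i hti
    have htx : t ≠ x := fun h => (hP.1 i hti) (by simp [h])
    exact (hP.2.1 t (by simpa using htx)).unique (hgmem t htx) hti
  refine ⟨fun i => Finset.univ.filter (· ∈ P i), g, fun i t => by simp, hguniq, ?_, ?_⟩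
  · have hcard := Finset.card_eq_sum_card_fiberwise
      (f := g) (s := Finset.univ.erase x) (t := Finset.univ) (fun t _ => Finset.mem_univ _)
    have hfib : ∀ i : Fin (1 + l),
        ((Finset.univ.erase x).filter fun t => g t = i) = Finset.univ.filter (· ∈ P i) := by
      intro i
      ext t
      simp only [Finset.mem_filter, Finset.mem_erase, Finset.mem_univ, true_and, and_true]
      constructor
      · rintro ⟨htx, hgt⟩
        have := hgmem t htx
        rwa [hgt] at this
      · intro hti
        have htx : t ≠ x := fun h => (hP.1 i hti) (by simp [h])
        exact ⟨htx, hguniq t i hti⟩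
    have herase : (Finset.univ.erase x).card + 1 = Fintype.card V := by
      rw [Finset.card_erase_of_mem (Finset.mem_univ x), Finset.card_univ]
      have : 0 < Fintype.card V := Fintype.card_pos_iff.2 ⟨x⟩
      omega
    rw [hcard] at herase
    rw [← herase]
    congr 1
    exact Finset.sum_congr rfl (fun i _ => by rw [hfib i])
  · intro X J
    have hdisj : ∀ i ∈ J, ∀ j ∈ J, i ≠ j →
        Disjoint ((Finset.univ.filter (· ∈ P i)) ∩ X) ((Finset.univ.filter (· ∈ P j)) ∩ X) := by
      intro i _ j _ hij
      rw [Finset.disjoint_left]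
      intro t hti htj
      simp only [Finset.mem_inter, Finset.mem_filter, Finset.mem_univ, true_and] at hti htj
      have h1 : t ∈ ({x}ᶜ : Set V) := hP.1 i hti.1
      exact hij ((hP.2.1 t h1).unique hti.1 htj.1)
    calc (∑ i ∈ J, ((Finset.univ.filter (· ∈ P i)) ∩ X).card)
        = (J.biUnion fun i => (Finset.univ.filter (· ∈ P i)) ∩ X).card :=
          (Finset.card_biUnion hdisj).symm
      _ ≤ X.card := Finset.card_le_card (by
          intro t ht
          simp only [Finset.mem_biUnion, Finset.mem_inter] at ht
          obtain ⟨i, -, -, htX⟩ := ht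
          exact htX)


lemma card_le_two_of_pairwise_ttw (hdiag : ∀ i : Fin (1 + l), M i i = true ↔ 1 ≤ (i : ℕ))
    (hobs : MinimalObstruction A M)
    {s : Finset V} (h : ∀ a ∈ s, ∀ b ∈ s, a ≠ b → TTw A a b) : s.card ≤ 2 := by
  by_contra h'
  push_neg at h'
  obtain ⟨a, ha, b, hb, c, hc, hab, hac, hbc⟩ := Finset.two_lt_card.1 h'
  exact no_three_ttw hdiag hobs (h a ha b hb hab) (h a ha c hc hac) (h b hb c hc hbc)

end Aux

theorem stmt14 [Fintype V] {l : ℕ} (A : V → V → Prop) (hirr : ∀ v, ¬ A v v)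
    (M : Fin (1 + l) → Fin (1 + l) → Bool)
    (hdiag : ∀ i : Fin (1 + l), M i i = true ↔ 1 ≤ (i : ℕ))
    (hobs : MinimalObstruction A M)
    (htt : ∃ u v : V, TrueTwinsOn A Set.univ u v) :
    Fintype.card V ≤ 2 * (l + 1) := by
  classical
  haveI : DecidableEq V := Classical.decEq V
  obtain ⟨u, v, htuv⟩ := htt
  have huv : TTw A u v := ttw_of_trueTwinsOn htuv
  have hvu : TTw A v u := huv.symm
  have hvx := huv.2.2.2   -- ∀ t, t ≠ u → t ≠ v → (A u t ↔ A v t) ∧ (A t u ↔ A t v)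
  by_contra hN
  push_neg at hN
  have hNcard : 2 * l + 3 ≤ Fintype.card V := by omega
  set I : Finset (Fin (1 + l)) := Finset.univ.erase 0 with hI
  have hIcard : I.card = l := by
    rw [hI, Finset.card_erase_of_mem (Finset.mem_univ _), Finset.card_univ, Fintype.card_fin]
    omega
  have hmemI : ∀ i : Fin (1 + l), i ∈ I ↔ i ≠ 0 := by
    intro i; rw [hI, Finset.mem_erase]; simp
  -- T : an M-partition of D - v
  obtain ⟨P, hP⟩ := hobs.2 v
  obtain ⟨F, pg, hFmem, hpg, hFsum, hFinter⟩ := partition_finsets hP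
  obtain ⟨i0, hu0', -⟩ := hP.2.1 u (by simpa using huv.1)
  have hi00 : i0 = 0 := mem_part_zero hdiag hobs.1 huv hP hu0'
  rw [hi00] at hu0'
  have hu0 : u ∈ P 0 := hu0'
  -- vertices distinct from v lie in some part
  have hPmem : ∀ z : V, z ≠ v → z ∈ P (pg z) ∧ ∀ i, z ∈ P i → pg z = i := by
    intro z hz
    obtain ⟨i, hi, -⟩ := hP.2.1 z (by simpa using hz)
    exact ⟨by rw [hpg z i hi]; exact hi, fun j hj => hpg z j hj⟩
  have hPnv : ∀ {i : Fin (1 + l)} {z : V}, z ∈ P i → z ≠ v := by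
    intro i z hz h
    exact (hP.1 i hz) (by simp [h])
  have hPuniq : ∀ {i j : Fin (1 + l)} {z : V}, z ∈ P i → z ∈ P j → i = j := by
    intro i j z hi hj
    exact ((hP.2.1 z (by simpa using hPnv hi)).unique hi hj)
  -- pairs in nonzero parts of T are true twins in D
  have hTclique_ttw : ∀ {i : Fin (1 + l)}, i ≠ 0 → ∀ {a b : V}, a ∈ P i → b ∈ P i →
      a ≠ b → TTw A a b := by
    intro i hi0 a b ha hb hne
    have hau : a ≠ u := fun h => hi0 (hPuniq ha (h ▸ hu0))
    have hbu : b ≠ u := fun h => hi0 (hPuniq hb (h ▸ hu0))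
    have hav : a ≠ v := hPnv ha
    have hbv : b ≠ v := hPnv hb
    refine clique_pair_ttw hdiag hP hi0 ha hb hne ⟨?_, ?_⟩
    · -- A a v ↔ A b v
      have h1 := (hvx a hau hav).2  -- A a u ↔ A a v
      have h2 := (hvx b hbu hbv).2
      exact (h1.symm.trans ((part_unif hP ha hb (t := u) hau.symm hbu.symm huv.1).2)).trans h2
    · have h1 := (hvx a hau hav).1  -- A u a ↔ A v a
      have h2 := (hvx b hbu hbv).1
      exact (h1.symm.trans ((part_unif hP ha hb (t := u) hau.symm hbu.symm huv.1).1)).trans h2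
  have hT2 : ∀ i ∈ I, (F i).card ≤ 2 := by
    intro i hi
    refine card_le_two_of_pairwise_ttw hdiag hobs ?_
    intro a ha b hb hne
    exact hTclique_ttw ((hmemI i).1 hi) ((hFmem i a).1 ha) ((hFmem i b).1 hb) hne
  have hsumsplit : (∑ i, (F i).card) = (F 0).card + ∑ i ∈ I, (F i).card := by
    rw [hI]
    exact (Finset.add_sum_erase _ _ (Finset.mem_univ 0)).symm
  have hTIle : ∑ i ∈ I, (F i).card ≤ 2 * l := by
    calc ∑ i ∈ I, (F i).card ≤ ∑ _i ∈ I, 2 := Finset.sum_le_sum hT2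
    _ = 2 * l := by rw [Finset.sum_const, hIcard, smul_eq_mul]; omega
  have hF0big : 2 ≤ (F 0).card := by
    have := hFsum
    omega
  have huF0 : u ∈ F 0 := (hFmem 0 u).2 hu0
  -- the set of "false copies of u"
  set W0 : Finset V := (F 0).erase u with hW0
  set m : ℕ := W0.card with hm
  have hmcard : (F 0).card = m + 1 := by
    rw [hm, hW0, Finset.card_erase_of_mem huF0]
    have : 0 < (F 0).card := by omega
    omega
  have hm1 : 1 ≤ m := by omega
  have hW0P : ∀ w' ∈ W0, w' ∈ P 0 ∧ w' ≠ u := by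
    intro w' hw'
    rw [hW0, Finset.mem_erase] at hw'
    exact ⟨(hFmem 0 w').1 hw'.2, hw'.1⟩
  -- basic facts about false copies
  have hWadj : ∀ w' ∈ W0, ¬ A u w' ∧ ¬ A w' u ∧ ¬ A v w' ∧ ¬ A w' v := by
    intro w' hw'
    obtain ⟨hw'P, hw'u⟩ := hW0P w' hw'
    have h1 : ¬ A u w' := part0_indep hdiag hP hu0 hw'P (Ne.symm hw'u)
    have h2 : ¬ A w' u := part0_indep hdiag hP hw'P hu0 hw'u
    have h3 := hvx w' hw'u (hPnv hw'P)
    exact ⟨h1, h2, fun h => h1 (h3.1.2 h), fun h => h2 (h3.2.2 h)⟩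
  -- mimicry between two distinct false copies (valid at every third vertex, including v)
  have hWWmim : ∀ w1 ∈ W0, ∀ w2 ∈ W0, w1 ≠ w2 → ∀ t, t ≠ w1 → t ≠ w2 →
      (A t w1 ↔ A t w2) ∧ (A w1 t ↔ A w2 t) := by
    intro w1 hw1 w2 hw2 hne t ht1 ht2
    by_cases htv : t = v
    · subst htv
      exact ⟨iff_of_false (hWadj w1 hw1).2.2.1 (hWadj w2 hw2).2.2.1,
             iff_of_false (hWadj w1 hw1).2.2.2 (hWadj w2 hw2).2.2.2⟩
    · exact part_unif hP (hW0P w1 hw1).1 (hW0P w2 hw2).1 ht1 ht2 htv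
  -- mimicry between a false copy and u (away from v)
  have hWumim : ∀ w' ∈ W0, ∀ t, t ≠ w' → t ≠ u → t ≠ v →
      ((A t w') ↔ (A t u)) := by
    intro w' hw' t h1 h2 h3
    exact (part_unif hP (hW0P w' hw').1 hu0 h1 h2 h3).1
  have hWumim' : ∀ w' ∈ W0, ∀ t, t ≠ w' → t ≠ u → t ≠ v →
      ((A w' t) ↔ (A u t)) := by
    intro w' hw' t h1 h2 h3
    exact (part_unif hP (hW0P w' hw').1 hu0 h1 h2 h3).2
  by_cases hmge2 : 2 ≤ m
  · -- CASE m ≥ 2 : at least two false copies of u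
    obtain ⟨w2, hw2⟩ := Finset.card_pos.1 (show 0 < W0.card by omega)
    obtain ⟨hw2P, hw2u⟩ := hW0P w2 hw2
    have hw2v : w2 ≠ v := hPnv hw2P
    obtain ⟨Q, hQ⟩ := hobs.2 w2
    obtain ⟨G, qg, hGmem, hqg, hGsum, hGinter⟩ := partition_finsets hQ
    have hQnw2 : ∀ {i : Fin (1 + l)} {z : V}, z ∈ Q i → z ≠ w2 := by
      intro i z hz h
      exact (hQ.1 i hz) (by simp [h])
    have hQuniq : ∀ {i j : Fin (1 + l)} {z : V}, z ∈ Q i → z ∈ Q j → i = j := by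
      intro i j z hi hj
      exact ((hQ.2.1 z (by simpa using hQnw2 hi)).unique hi hj)
    have hQg : ∀ z : V, z ≠ w2 → z ∈ Q (qg z) := by
      intro z hz
      obtain ⟨i, hi, -⟩ := hQ.2.1 z (by simpa using hz)
      rw [hqg z i hi]
      exact hi
    obtain ⟨α, hQu, -⟩ := hQ.2.1 u (by simpa using (Ne.symm hw2u))
    obtain ⟨β, hQv, -⟩ := hQ.2.1 v (by simpa using (Ne.symm hw2v))
    -- K1 : no other false copy can be in part 0 of Q
    have hK1 : ∀ w' ∈ W0.erase w2, ∀ {p : Fin (1 + l)}, w' ∈ Q p → p ≠ 0 := by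
      intro w' hw'e p hw'Q hp0
      subst hp0
      rw [Finset.mem_erase] at hw'e
      obtain ⟨hw'w2, hw'W⟩ := hw'e
      have hw'P : w' ∈ P 0 := (hW0P w' hw'W).1
      refine extend_contra hobs.1 hQ 0 ?_
      intro j t ht
      have htw2 : t ≠ w2 := hQnw2 ht
      by_cases htw' : t = w'
      · subst htw'
        have hj0 : j = 0 := hQuniq ht hw'Q
        subst hj0
        rw [M00_false hdiag]
        simp only [Bool.false_eq_true, iff_false]
        exact ⟨part0_indep hdiag hP hw2P hw'P hw'w2.symm,
               part0_indep hdiag hP hw'P hw2P hw'w2⟩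
      · have h1 := hWWmim w' hw'W w2 hw2 hw'w2 t htw' htw2
        exact ⟨(h1.2.symm).trans (hQ.2.2 0 j w' hw'Q t ht (Ne.symm htw')),
               (h1.1.symm).trans (hQ.2.2 j 0 t ht w' hw'Q htw')⟩
    -- K2 : every other false copy is alone in its part of Q
    have hK2 : ∀ w' ∈ W0.erase w2, ∀ {p : Fin (1 + l)}, w' ∈ Q p → ∀ c ∈ Q p, c = w' := by
      intro w' hw'e p hw'Q c hcQ
      by_contra hcne
      have hp0 : p ≠ 0 := hK1 w' hw'e hw'Q
      rw [Finset.mem_erase] at hw'e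
      obtain ⟨hw'w2, hw'W⟩ := hw'e
      have hcw2 : c ≠ w2 := hQnw2 hcQ
      have hclique := part_clique hdiag hQ hp0 hw'Q hcQ (fun h => hcne h.symm)
      have hcu : c ≠ u := by
        intro h
        exact (hWadj w' hw'W).2.1 (h ▸ hclique.1)
      have hcv : c ≠ v := by
        intro h
        exact (hWadj w' hw'W).2.2.2 (h ▸ hclique.1)
      have h1 : A w2 c := by
        have := (hWWmim w2 hw2 w' hw'W (Ne.symm hw'w2) c hcw2 (fun h => hcne h)).2
        exact this.2 hclique.1
      have h2 : A u c := (hWumim' w2 hw2 c hcw2 hcu hcv).1 h1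
      have h3 := part_unif hQ hw'Q hcQ (t := u) (Ne.symm (hW0P w' hw'W).2) hcu.symm (Ne.symm hw2u)
      exact (hWadj w' hw'W).1 (h3.1.2 h2)
    -- pairs of a nonzero part of Q avoiding u,v are true twins in D
    have hQclique_ttw : ∀ {i : Fin (1 + l)}, i ≠ 0 → ∀ {a b : V}, a ∈ Q i → b ∈ Q i →
        a ≠ u → a ≠ v → b ≠ u → b ≠ v → a ≠ b → TTw A a b := by
      intro i hi0 a b ha hb hau hav hbu hbv hne
      have haw2 : a ≠ w2 := hQnw2 ha
      have hbw2 : b ≠ w2 := hQnw2 hb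
      refine clique_pair_ttw hdiag hQ hi0 ha hb hne ⟨?_, ?_⟩
      · -- A a w2 ↔ A b w2
        exact ((hWumim w2 hw2 a haw2 hau hav).trans
          ((part_unif hQ ha hb (t := u) hau.symm hbu.symm (Ne.symm hw2u)).2)).trans
          (hWumim w2 hw2 b hbw2 hbu hbv).symm
      · exact ((hWumim' w2 hw2 a haw2 hau hav).trans
          ((part_unif hQ ha hb (t := u) hau.symm hbu.symm (Ne.symm hw2u)).1)).trans
          (hWumim' w2 hw2 b hbw2 hbu hbv).symm
    -- finset bound for parts of Q minus u,v
    set uvF : Finset V := {u, v} with huvF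
    have huvFcard : uvF.card ≤ 2 := by
      rw [huvF]
      exact (Finset.card_insert_le _ _).trans (by simp)
    have hG2 : ∀ i ∈ I, ((G i) \ uvF).card ≤ 2 := by
      intro i hi
      refine card_le_two_of_pairwise_ttw hdiag hobs ?_
      intro a ha b hb hne
      rw [Finset.mem_sdiff, huvF] at ha hb
      simp only [Finset.mem_insert, Finset.mem_singleton, not_or] at ha hb
      exact hQclique_ttw ((hmemI i).1 hi) ((hGmem i a).1 ha.1) ((hGmem i b).1 hb.1)
        ha.2.1 ha.2.2 hb.2.1 hb.2.2 hne
    -- the indices of the other false copies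
    set WI : Finset (Fin (1 + l)) := (W0.erase w2).image qg with hWI
    have hWIsub : WI ⊆ I := by
      intro i hi
      rw [hWI, Finset.mem_image] at hi
      obtain ⟨w', hw', hqw'⟩ := hi
      have hw'w2 : w' ≠ w2 := (Finset.mem_erase.1 hw').1
      rw [hmemI, ← hqw']
      exact hK1 w' hw' (hQg w' hw'w2)
    have hWIcard : WI.card = m - 1 := by
      rw [hWI]
      rw [Finset.card_image_of_injOn, Finset.card_erase_of_mem hw2]
      intro a ha b hb hab
      have haw2 : a ≠ w2 := (Finset.mem_erase.1 ha).1
      have : a ∈ Q (qg b) := by rw [← hab]; exact hQg a haw2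
      exact (hK2 b hb (hQg b (Finset.mem_erase.1 hb).1) a this)
    have hWIsingle : ∀ i ∈ WI, (G i).card = 1 := by
      intro i hi
      rw [hWI, Finset.mem_image] at hi
      obtain ⟨w', hw', hqw'⟩ := hi
      have hw'w2 : w' ≠ w2 := (Finset.mem_erase.1 hw').1
      rw [Finset.card_eq_one]
      refine ⟨w', ?_⟩
      ext c
      rw [Finset.mem_singleton]
      constructor
      · intro hc
        exact hK2 w' hw' (hqw' ▸ hQg w' hw'w2) c ((hGmem i c).1 hc)
      · intro hc
        subst hc
        exact (hGmem i c).2 (hqw' ▸ hQg c hw'w2)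
    have hWInouv : ∀ i ∈ WI, u ∉ G i ∧ v ∉ G i := by
      intro i hi
      rw [hWI, Finset.mem_image] at hi
      obtain ⟨w', hw', hqw'⟩ := hi
      have hw'w2 : w' ≠ w2 := (Finset.mem_erase.1 hw').1
      have hw'W : w' ∈ W0 := (Finset.mem_erase.1 hw').2
      constructor
      · intro hc
        exact (hW0P w' hw'W).2 (hK2 w' hw' (hqw' ▸ hQg w' hw'w2) u ((hGmem i u).1 hc)).symm
      · intro hc
        have := hK2 w' hw' (hqw' ▸ hQg w' hw'w2) v ((hGmem i v).1 hc)
        exact (hPnv (hW0P w' hw'W).1) this.symm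
    -- generic sum bounds for the partition Q
    have hSsum_ge : 2 * l + 2 ≤ ∑ i, (G i).card := by omega
    have hSsplit : (∑ i, (G i).card) = (G 0).card + ∑ i ∈ I, (G i).card := by
      rw [hI]
      exact (Finset.add_sum_erase _ _ (Finset.mem_univ 0)).symm
    have hSIsplit : ∑ i ∈ I, (G i).card
        = (m - 1) + ∑ i ∈ I \ WI, (G i).card := by
      rw [← Finset.sum_sdiff hWIsub]
      rw [Finset.sum_congr rfl hWIsingle]
      rw [Finset.sum_const, smul_eq_mul, mul_one, ← hWIcard]
      omega
    have hIWIcard : (I \ WI).card = l - (m - 1) := by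
      rw [Finset.card_sdiff_of_subset hWIsub, hIcard, hWIcard]
    have hsdiffinter : ∀ i, (G i).card = ((G i) \ uvF).card + ((G i) ∩ uvF).card := by
      intro i
      rw [Finset.card_sdiff_add_card_inter]
    have hsum_sdiff : ∑ i ∈ I \ WI, (G i).card =
        (∑ i ∈ I \ WI, ((G i) \ uvF).card) + ∑ i ∈ I \ WI, ((G i) ∩ uvF).card := by
      rw [← Finset.sum_add_distrib]
      exact Finset.sum_congr rfl (fun i _ => hsdiffinter i)
    have hsdiff_le : ∑ i ∈ I \ WI, ((G i) \ uvF).card ≤ 2 * (I \ WI).card := by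
      calc ∑ i ∈ I \ WI, ((G i) \ uvF).card ≤ ∑ _i ∈ I \ WI, 2 :=
            Finset.sum_le_sum (fun i hi => hG2 i (Finset.mem_sdiff.1 hi).1)
        _ = 2 * (I \ WI).card := by rw [Finset.sum_const, smul_eq_mul]; omega
    have hcardrel : (I \ WI).card + WI.card = I.card := by
      rw [Finset.card_sdiff_add_card_eq_card hWIsub]
    -- case analysis on the parts of u and v in Q
    by_cases hα0 : α = 0
    · -- u lies in part 0 of Q; then part 0 of Q is {u} and counting gives a contradiction
      subst hα0
      have hβ0 : β ≠ 0 := by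
        intro h
        subst h
        exact part0_indep hdiag hQ hQu hQv huv.1 huv.2.1
      have hS0u : ∀ z ∈ Q 0, z = u := by
        intro z hz
        by_contra hzu
        have hzv : z ≠ v := fun h => hβ0 (hQuniq (h ▸ hz) hQv).symm
        have hMβ0 : M β 0 = true := (hQ.2.2 β 0 v hQv u hQu huv.1.symm).1 huv.2.2.1
        have hAvz : A v z := (hQ.2.2 β 0 v hQv z hz (Ne.symm hzv)).2 hMβ0
        have hAuz : A u z := (hvx z hzu hzv).1.2 hAvz
        exact part0_indep hdiag hQ hQu hz (Ne.symm hzu) hAuz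
      have hG0le : (G 0).card ≤ 1 := by
        refine Finset.card_le_one.2 (fun a ha b hb => ?_)
        rw [hS0u a ((hGmem 0 a).1 ha), hS0u b ((hGmem 0 b).1 hb)]
      have hinter_le : ∑ i ∈ I \ WI, ((G i) ∩ uvF).card ≤ 1 := by
        have hsubv : ∀ i ∈ I \ WI, (G i) ∩ uvF ⊆ (G i) ∩ ({v} : Finset V) := by
          intro i hi z hz
          rw [Finset.mem_inter] at hz ⊢
          refine ⟨hz.1, ?_⟩
          rw [huvF] at hz
          rcases Finset.mem_insert.1 hz.2 with h | h
          · subst h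
            exact absurd (hQuniq ((hGmem i z).1 hz.1) hQu)
              ((hmemI i).1 (Finset.mem_sdiff.1 hi).1)
          · exact h
        calc ∑ i ∈ I \ WI, ((G i) ∩ uvF).card
            ≤ ∑ i ∈ I \ WI, ((G i) ∩ ({v} : Finset V)).card :=
              Finset.sum_le_sum (fun i hi => Finset.card_le_card (hsubv i hi))
          _ ≤ ({v} : Finset V).card := hGinter {v} (I \ WI)
          _ = 1 := Finset.card_singleton v
      omega
    by_cases hβ0 : β = 0
    · -- v lies in part 0 of Q : symmetric to the previous case
      subst hβ0
      have hS0v : ∀ z ∈ Q 0, z = v := by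
        intro z hz
        by_contra hzv
        have hzu : z ≠ u := fun h => hα0 (hQuniq (h ▸ hz) hQu).symm
        have hMα0 : M α 0 = true := (hQ.2.2 α 0 u hQu v hQv huv.1).1 huv.2.1
        have hAuz : A u z := (hQ.2.2 α 0 u hQu z hz (Ne.symm hzu)).2 hMα0
        have hAvz : A v z := (hvx z hzu hzv).1.1 hAuz
        exact part0_indep hdiag hQ hQv hz (Ne.symm hzv) hAvz
      have hG0le : (G 0).card ≤ 1 := by
        refine Finset.card_le_one.2 (fun a ha b hb => ?_)
        rw [hS0v a ((hGmem 0 a).1 ha), hS0v b ((hGmem 0 b).1 hb)]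
      have hinter_le : ∑ i ∈ I \ WI, ((G i) ∩ uvF).card ≤ 1 := by
        have hsubv : ∀ i ∈ I \ WI, (G i) ∩ uvF ⊆ (G i) ∩ ({u} : Finset V) := by
          intro i hi z hz
          rw [Finset.mem_inter] at hz ⊢
          refine ⟨hz.1, ?_⟩
          rw [huvF] at hz
          rcases Finset.mem_insert.1 hz.2 with h | h
          · simpa using h
          · rw [Finset.mem_singleton] at h
            subst h
            exact absurd (hQuniq ((hGmem i z).1 hz.1) hQv)
              ((hmemI i).1 (Finset.mem_sdiff.1 hi).1)
        calc ∑ i ∈ I \ WI, ((G i) ∩ uvF).card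
            ≤ ∑ i ∈ I \ WI, ((G i) ∩ ({u} : Finset V)).card :=
              Finset.sum_le_sum (fun i hi => Finset.card_le_card (hsubv i hi))
          _ ≤ ({u} : Finset V).card := hGinter {u} (I \ WI)
          _ = 1 := Finset.card_singleton u
      omega
    -- main case : u and v both lie in clique parts of Q
    · have hαI : α ∈ I := (hmemI α).2 hα0
      have hβI : β ∈ I := (hmemI β).2 hβ0
      have hαWI : α ∉ WI := by
        intro h
        exact (hWInouv α h).1 ((hGmem α u).2 hQu)
      by_cases hbig : 2 ≤ ((G α) \ uvF).card
      · -- U-KILL : the part of u contains a true-twin pair, delete one of them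
        obtain ⟨x0, hx0, y0, hy0, hxy0⟩ := (Finset.one_lt_card (s := (G α) \ uvF)).1 (by omega)
        rw [Finset.mem_sdiff, huvF] at hx0 hy0
        simp only [Finset.mem_insert, Finset.mem_singleton, not_or] at hx0 hy0
        obtain ⟨hx0G, hx0u, hx0v⟩ := hx0
        obtain ⟨hy0G, hy0u, hy0v⟩ := hy0
        have hx0Q : x0 ∈ Q α := (hGmem α x0).1 hx0G
        have hy0Q : y0 ∈ Q α := (hGmem α y0).1 hy0G
        have htt0 : TTw A x0 y0 :=
          hQclique_ttw hα0 hx0Q hy0Q hx0u hx0v hy0u hy0v hxy0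
        have huy0 : u ≠ y0 := Ne.symm hy0u
        have hAy0u := part_clique hdiag hQ hα0 hy0Q hQu (Ne.symm huy0)
        -- hAy0u : A y0 u ∧ A u y0
        obtain ⟨R, hR⟩ := hobs.2 x0
        obtain ⟨H, rg, hHmem, hrg, hHsum, hHinter⟩ := partition_finsets hR
        have hRnx0 : ∀ {i : Fin (1 + l)} {z : V}, z ∈ R i → z ≠ x0 := by
          intro i z hz h
          exact (hR.1 i hz) (by simp [h])
        obtain ⟨γ, hRy0, -⟩ := hR.2.1 y0 (by simpa using (Ne.symm hxy0))
        have hγ0 : γ = 0 := mem_part_zero hdiag hobs.1 htt0.symm hR hRy0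
        subst hγ0
        have hRclique_ttw : ∀ {i : Fin (1 + l)}, i ≠ 0 → ∀ {a b : V}, a ∈ R i → b ∈ R i →
            a ≠ b → TTw A a b := by
          intro i hi0 a b ha hb hne
          have hay0 : a ≠ y0 := fun h =>
            hi0 (((hR.2.1 a (by simpa using hRnx0 ha)).unique ha (h ▸ hRy0)))
          have hby0 : b ≠ y0 := fun h =>
            hi0 (((hR.2.1 b (by simpa using hRnx0 hb)).unique hb (h ▸ hRy0)))
          have hax0 : a ≠ x0 := hRnx0 ha
          have hbx0 : b ≠ x0 := hRnx0 hb
          have hmima := htt0.2.2.2 a hax0 hay0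
          have hmimb := htt0.2.2.2 b hbx0 hby0
          have hun := part_unif hR ha hb (t := y0) (Ne.symm hay0) (Ne.symm hby0) (Ne.symm hxy0)
          exact clique_pair_ttw hdiag hR hi0 ha hb hne
            ⟨(hmima.2.trans hun.2).trans hmimb.2.symm,
             (hmima.1.trans hun.1).trans hmimb.1.symm⟩
        have hH2 : ∀ i ∈ I, (H i).card ≤ 2 := by
          intro i hi
          refine card_le_two_of_pairwise_ttw hdiag hobs ?_
          intro a ha b hb hne
          exact hRclique_ttw ((hmemI i).1 hi) ((hHmem i a).1 ha) ((hHmem i b).1 hb) hne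
        have hHsplit : (∑ i, (H i).card) = (H 0).card + ∑ i ∈ I, (H i).card := by
          rw [hI]
          exact (Finset.add_sum_erase _ _ (Finset.mem_univ 0)).symm
        have hHIle : ∑ i ∈ I, (H i).card ≤ 2 * l := by
          calc ∑ i ∈ I, (H i).card ≤ ∑ _i ∈ I, 2 := Finset.sum_le_sum hH2
            _ = 2 * l := by rw [Finset.sum_const, hIcard, smul_eq_mul]; omega
        have hH0ge : 2 ≤ (H 0).card := by omega
        have hy0H : y0 ∈ H 0 := (hHmem 0 y0).2 hRy0
        obtain ⟨z, hzH, hzy0⟩ := Finset.exists_mem_ne (s := H 0) (by omega) y0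
        have hzR : z ∈ R 0 := (hHmem 0 z).1 hzH
        have hnzy0 : ¬ A z y0 := part0_indep hdiag hR hzR hRy0 hzy0
        have hzu : z ≠ u := by
          intro h
          rw [h] at hnzy0
          exact hnzy0 hAy0u.2
        have hzv : z ≠ v := by
          intro h
          rw [h] at hnzy0
          exact hnzy0 ((hvx y0 hy0u hy0v).1.1 hAy0u.2)
        have hzw2 : z ≠ w2 := by
          intro h
          rw [h] at hnzy0
          exact hnzy0 ((hWumim' w2 hw2 y0 (hQnw2 hy0Q) hy0u hy0v).2 hAy0u.2)
        have hzx0 : z ≠ x0 := hRnx0 hzR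
        -- S-side : z relates to u and y0 identically
        have hSun := part_unif hQ hQu hy0Q (t := z) hzu hzy0 hzw2
        -- R-side : u relates to z and y0 identically
        have hRun := part_unif hR hzR hRy0 (t := u) (Ne.symm hzu) huy0 (Ne.symm hx0u)
        exact hnzy0 (hSun.1.1 (hRun.2.2 hAy0u.1))
      · -- |G α \ {u,v}| ≤ 1 : counting, with a further split on |G 0|
        have hαIWI : α ∈ I \ WI := Finset.mem_sdiff.2 ⟨hαI, hαWI⟩
        have hk1 : 1 ≤ (I \ WI).card := Finset.card_pos.2 ⟨α, hαIWI⟩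
        have hsdiff_le' : ∑ i ∈ I \ WI, ((G i) \ uvF).card ≤ 2 * (I \ WI).card - 1 := by
          have hsplitα : ∑ i ∈ I \ WI, ((G i) \ uvF).card
              = ((G α) \ uvF).card + ∑ i ∈ (I \ WI).erase α, ((G i) \ uvF).card :=
            (Finset.add_sum_erase _ _ hαIWI).symm
          have hrest : ∑ i ∈ (I \ WI).erase α, ((G i) \ uvF).card
              ≤ 2 * ((I \ WI).card - 1) := by
            calc ∑ i ∈ (I \ WI).erase α, ((G i) \ uvF).card
                ≤ ∑ _i ∈ (I \ WI).erase α, 2 :=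
                  Finset.sum_le_sum (fun i hi =>
                    hG2 i (Finset.mem_sdiff.1 (Finset.mem_of_mem_erase hi)).1)
              _ = 2 * ((I \ WI).card - 1) := by
                  rw [Finset.sum_const, smul_eq_mul, Finset.card_erase_of_mem hαIWI]
                  omega
          omega
        have hinter_le : ∑ i ∈ I \ WI, ((G i) ∩ uvF).card ≤ 2 :=
          le_trans (hGinter uvF (I \ WI)) huvFcard
        by_cases hG0 : (G 0).card ≤ 1
        · omega
        · push_neg at hG0
          have hG0' : 2 ≤ (G 0).card := hG0
          -- members of part 0 of Q : each sits alone in a nonzero part of T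
          have hQ0mem : ∀ z ∈ G 0, z ∈ Q 0 ∧ z ≠ u ∧ z ≠ v ∧ z ≠ w2 := by
            intro z hz
            have hzQ : z ∈ Q 0 := (hGmem 0 z).1 hz
            have hzu : z ≠ u := fun h => hα0 (hQuniq (h ▸ hzQ) hQu).symm
            have hzv : z ≠ v := fun h => hβ0 (hQuniq (h ▸ hzQ) hQv).symm
            exact ⟨hzQ, hzu, hzv, hQnw2 hzQ⟩
          have hS0sub : ∀ z ∈ G 0, pg z ∈ I ∧ F (pg z) = {z} := by
            intro z hz
            obtain ⟨hzQ, hzu, hzv, hzw2⟩ := hQ0mem z hz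
            have hzP : z ∈ P (pg z) := (hPmem z hzv).1
            have hpgz0 : pg z ≠ 0 := by
              intro h
              have hzF0 : z ∈ F 0 := (hFmem 0 z).2 (h ▸ hzP)
              have hzW0 : z ∈ W0.erase w2 := by
                rw [Finset.mem_erase, hW0, Finset.mem_erase]
                exact ⟨hzw2, hzu, hzF0⟩
              exact hK1 z hzW0 hzQ rfl
            refine ⟨(hmemI _).2 hpgz0, ?_⟩
            -- the part of z in T is a singleton
            obtain ⟨z', hz'G, hz'z⟩ := Finset.exists_mem_ne (s := G 0) (by omega) z
            obtain ⟨hz'Q, hz'u, hz'v, hz'w2⟩ := hQ0mem z' hz'G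
            ext c
            rw [Finset.mem_singleton]
            constructor
            · intro hcF
              by_contra hcz
              have hcP : c ∈ P (pg z) := (hFmem _ c).1 hcF
              have httcz : TTw A c z := hTclique_ttw hpgz0 hcP hzP hcz
              have hcz' : c ≠ z' := by
                intro h
                exact part0_indep hdiag hQ hz'Q hzQ hz'z (h ▸ httcz.2.1)
              have hcw2 : c ≠ w2 := by
                intro h
                exact hpgz0 (hPuniq (h ▸ hcP) hw2P)
              have h1 : ¬ A c z' := by
                intro h
                exact part0_indep hdiag hQ hzQ hz'Q (Ne.symm hz'z)
                  ((httcz.2.2.2 z' (Ne.symm hcz') hz'z).1.1 h)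
              exact h1 ((part_unif hQ hzQ hz'Q (t := c) (fun h => hcz h)
                hcz' hcw2).1.1 httcz.2.1)
            · intro h
              subst h
              exact (hFmem _ c).2 hzP
          set S0I : Finset (Fin (1 + l)) := (G 0).image pg with hS0I
          have hS0Isub : S0I ⊆ I := by
            intro i hi
            rw [hS0I, Finset.mem_image] at hi
            obtain ⟨z, hz, hzi⟩ := hi
            exact hzi ▸ (hS0sub z hz).1
          have hS0Icard : S0I.card = (G 0).card := by
            rw [hS0I]
            refine Finset.card_image_of_injOn ?_
            intro a ha b hb hab
            have hbF : b ∈ F (pg a) := by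
              rw [hab]
              exact (hFmem _ b).2 (hPmem b (hQ0mem b hb).2.2.1).1
            rw [(hS0sub a ha).2, Finset.mem_singleton] at hbF
            exact hbF.symm
          have hsingle : ∀ i ∈ S0I, (F i).card = 1 := by
            intro i hi
            rw [hS0I, Finset.mem_image] at hi
            obtain ⟨z, hz, hzi⟩ := hi
            rw [← hzi, (hS0sub z hz).2, Finset.card_singleton]
          have hTsplit2 : ∑ i ∈ I, (F i).card
              = (G 0).card + ∑ i ∈ I \ S0I, (F i).card := by
            rw [← Finset.sum_sdiff hS0Isub]
            rw [Finset.sum_congr rfl hsingle, Finset.sum_const, smul_eq_mul, mul_one, hS0Icard]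
            omega
          have hTrest : ∑ i ∈ I \ S0I, (F i).card ≤ 2 * (I \ S0I).card := by
            calc ∑ i ∈ I \ S0I, (F i).card ≤ ∑ _i ∈ I \ S0I, 2 :=
                  Finset.sum_le_sum (fun i hi => hT2 i (Finset.mem_sdiff.1 hi).1)
              _ = 2 * (I \ S0I).card := by rw [Finset.sum_const, smul_eq_mul]; omega
          have hcardrel2 : (I \ S0I).card + S0I.card = I.card :=
            Finset.card_sdiff_add_card_eq_card hS0Isub
          omega
  · -- CASE m = 1 : exactly one false copy w of u, the rigid configuration
    have hmeq : m = 1 := by omega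
    obtain ⟨w, hwW0⟩ := Finset.card_eq_one.1 (by rw [← hm]; exact hmeq)
    have hwW : w ∈ W0 := by rw [hwW0]; exact Finset.mem_singleton_self w
    obtain ⟨hwP, hwu⟩ := hW0P w hwW
    have hwv : w ≠ v := hPnv hwP
    have hF0eq : F 0 = {u, w} := by
      rw [← Finset.insert_erase huF0, ← hW0, hwW0]
    have hF0card : (F 0).card = 2 := by omega
    have hsumIeq : ∑ i ∈ I, (F i).card = 2 * l := by omega
    have hTall2 : ∀ i ∈ I, (F i).card = 2 := by
      intro i hi
      by_contra hne2
      have hle1 : (F i).card ≤ 1 := by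
        have := hT2 i hi
        omega
      have hsp : ∑ j ∈ I, (F j).card = (F i).card + ∑ j ∈ I.erase i, (F j).card :=
        (Finset.add_sum_erase _ _ hi).symm
      have hrest : ∑ j ∈ I.erase i, (F j).card ≤ 2 * (l - 1) := by
        calc ∑ j ∈ I.erase i, (F j).card ≤ ∑ _j ∈ I.erase i, 2 :=
              Finset.sum_le_sum (fun j hj => hT2 j (Finset.mem_of_mem_erase hj))
          _ = 2 * (l - 1) := by
              rw [Finset.sum_const, smul_eq_mul, Finset.card_erase_of_mem hi, hIcard]
              omega
      have hl1 : 1 ≤ l := by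
        by_contra hl
        have hi0 : (i : ℕ) = 0 := by
          have := i.isLt
          omega
        exact ((hmemI i).1 hi) (Fin.ext (by rw [Fin.val_zero]; exact hi0))
      omega
    have hpair : ∀ i ∈ I, ∃ x y : V, x ≠ y ∧ F i = {x, y} :=
      fun i hi => Finset.card_eq_two.1 (hTall2 i hi)
    choose xx yy hxyne hxyF using hpair
    have hxxF : ∀ i (hi : i ∈ I), xx i hi ∈ F i := by
      intro i hi
      rw [hxyF i hi]
      exact Finset.mem_insert_self _ _
    have hyyF : ∀ i (hi : i ∈ I), yy i hi ∈ F i := by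
      intro i hi
      rw [hxyF i hi]
      exact Finset.mem_insert_of_mem (Finset.mem_singleton_self _)
    have hxxP : ∀ i (hi : i ∈ I), xx i hi ∈ P i := fun i hi => (hFmem i _).1 (hxxF i hi)
    have hyyP : ∀ i (hi : i ∈ I), yy i hi ∈ P i := fun i hi => (hFmem i _).1 (hyyF i hi)
    have httP : ∀ i (hi : i ∈ I), TTw A (xx i hi) (yy i hi) :=
      fun i hi => hTclique_ttw ((hmemI i).1 hi) (hxxP i hi) (hyyP i hi) (hxyne i hi)
    have hVenum : ∀ z : V, z ≠ v →
        z = u ∨ z = w ∨ ∃ i, ∃ hi : i ∈ I, z = xx i hi ∨ z = yy i hi := by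
      intro z hz
      have hzP := (hPmem z hz).1
      by_cases h0 : pg z = 0
      · have hzF : z ∈ F 0 := (hFmem _ _).2 (h0 ▸ hzP)
        rw [hF0eq] at hzF
        rcases Finset.mem_insert.1 hzF with h | h
        · exact Or.inl h
        · exact Or.inr (Or.inl (Finset.mem_singleton.1 h))
      · have hiI : pg z ∈ I := (hmemI _).2 h0
        have hzF : z ∈ F (pg z) := (hFmem _ _).2 hzP
        rw [hxyF _ hiI] at hzF
        rcases Finset.mem_insert.1 hzF with h | h
        · exact Or.inr (Or.inr ⟨_, hiI, Or.inl h⟩)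
        · exact Or.inr (Or.inr ⟨_, hiI, Or.inr (Finset.mem_singleton.1 h)⟩)
    have boolext : ∀ a b : Bool, (a = true ↔ b = true) → a = b := by decide
    -- the key structural facts on M
    have hMfacts : ∀ j, ∀ hj : j ∈ I, (M 0 j = false ∧ M j 0 = false) ∧
        ∀ i, ∀ hi : i ∈ I, i ≠ j →
          (M i j = M i 0 ∧ M 0 i = M j i) := by
      intro j hj
      have hj0 : j ≠ 0 := (hmemI j).1 hj
      set xj := xx j hj with hxj
      set yj := yy j hj with hyj
      have hxjP : xj ∈ P j := hxxP j hj
      have hyjP : yj ∈ P j := hyyP j hj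
      have hxjyj : xj ≠ yj := hxyne j hj
      have hxju : xj ≠ u := fun h => hj0 (hPuniq hxjP (h ▸ hu0))
      have hyju : yj ≠ u := fun h => hj0 (hPuniq hyjP (h ▸ hu0))
      have hxjv : xj ≠ v := hPnv hxjP
      have hyjv : yj ≠ v := hPnv hyjP
      have hxjw : xj ≠ w := fun h => hj0 (hPuniq hxjP (h ▸ hwP))
      have hyjw : yj ≠ w := fun h => hj0 (hPuniq hyjP (h ▸ hwP))
      obtain ⟨R, hR⟩ := hobs.2 yj
      obtain ⟨H, rg, hHmem, hrg, hHsum, hHinter⟩ := partition_finsets hR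
      have hRnyj : ∀ {i : Fin (1 + l)} {z : V}, z ∈ R i → z ≠ yj := by
        intro i z hzi h
        exact (hR.1 i hzi) (by simp [h])
      obtain ⟨γ, hRxj, -⟩ := hR.2.1 xj (by simpa using hxjyj)
      have hγ0 : γ = 0 := mem_part_zero hdiag hobs.1 (httP j hj) hR hRxj
      subst hγ0
      have hRclique_ttw : ∀ {i : Fin (1 + l)}, i ≠ 0 → ∀ {a b : V}, a ∈ R i → b ∈ R i →
          a ≠ b → TTw A a b := by
        intro i hi0 a b ha hb hne
        have haxj : a ≠ xj := fun h =>
          hi0 ((hR.2.1 a (by simpa using hRnyj ha)).unique ha (h ▸ hRxj))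
        have hbxj : b ≠ xj := fun h =>
          hi0 ((hR.2.1 b (by simpa using hRnyj hb)).unique hb (h ▸ hRxj))
        have hayj : a ≠ yj := hRnyj ha
        have hbyj : b ≠ yj := hRnyj hb
        have hmima := (httP j hj).2.2.2 a haxj hayj
        have hmimb := (httP j hj).2.2.2 b hbxj hbyj
        have hun := part_unif hR ha hb (t := xj) (Ne.symm haxj) (Ne.symm hbxj) hxjyj
        exact clique_pair_ttw hdiag hR hi0 ha hb hne
          ⟨(hmima.2.symm.trans hun.2).trans hmimb.2,
           (hmima.1.symm.trans hun.1).trans hmimb.1⟩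
      have hH2 : ∀ i ∈ I, (H i).card ≤ 2 := by
        intro i hi
        refine card_le_two_of_pairwise_ttw hdiag hobs ?_
        intro a ha b hb hne
        exact hRclique_ttw ((hmemI i).1 hi) ((hHmem i a).1 ha) ((hHmem i b).1 hb) hne
      have hHsplit : (∑ i, (H i).card) = (H 0).card + ∑ i ∈ I, (H i).card := by
        rw [hI]
        exact (Finset.add_sum_erase _ _ (Finset.mem_univ 0)).symm
      have hHIle : ∑ i ∈ I, (H i).card ≤ 2 * l := by
        calc ∑ i ∈ I, (H i).card ≤ ∑ _i ∈ I, 2 := Finset.sum_le_sum hH2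
          _ = 2 * l := by rw [Finset.sum_const, hIcard, smul_eq_mul]; omega
      obtain ⟨z, hzH, hzxj⟩ := Finset.exists_mem_ne (s := H 0)
        (by
          have hxH : xj ∈ H 0 := (hHmem 0 xj).2 hRxj
          omega) xj
      have hzR : z ∈ R 0 := (hHmem 0 z).1 hzH
      have hnzxj : ¬ A z xj := part0_indep hdiag hR hzR hRxj hzxj
      have hnxjz : ¬ A xj z := part0_indep hdiag hR hRxj hzR (Ne.symm hzxj)
      have hzyj : z ≠ yj := hRnyj hzR
      have hzu : z ≠ u := by
        intro h
        rw [h] at hzR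
        have h1 : ¬ A u xj := part0_indep hdiag hR hzR hRxj hxju.symm
        have h2 : ¬ A v xj := fun hh => h1 ((hvx xj hxju hxjv).1.2 hh)
        have h3 := part_unif hR hzR hRxj (t := v) huv.1.symm hxjv.symm hyjv.symm
        exact h2 (h3.1.1 huv.2.2.1)
      have hzv : z ≠ v := by
        intro h
        rw [h] at hzR
        have h1 : ¬ A v xj := part0_indep hdiag hR hzR hRxj hxjv.symm
        have h2 : ¬ A u xj := fun hh => h1 ((hvx xj hxju hxjv).1.1 hh)
        have h3 := part_unif hR hzR hRxj (t := u) huv.1 hxju.symm hyju.symm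
        exact h2 (h3.1.1 huv.2.1)
      have hzpair : ∀ i, ∀ hi : i ∈ I, i ≠ j → z ≠ xx i hi ∧ z ≠ yy i hi := by
        intro i hi hij
        have hi0 : i ≠ 0 := (hmemI i).1 hi
        have hMij : A (xx i hi) xj ↔ M i j = true :=
          hP.2.2 i j (xx i hi) (hxxP i hi) xj hxjP
            (fun h => hij (hPuniq (h ▸ hxxP i hi) hxjP))
        have hMij' : A (yy i hi) xj ↔ M i j = true :=
          hP.2.2 i j (yy i hi) (hyyP i hi) xj hxjP
            (fun h => hij (hPuniq (h ▸ hyyP i hi) hxjP))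
        have hxxj : xx i hi ≠ xj := fun h => hij (hPuniq (h ▸ hxxP i hi) hxjP)
        have hyxj : yy i hi ≠ xj := fun h => hij (hPuniq (h ▸ hyyP i hi) hxjP)
        have hxyj : xx i hi ≠ yj := fun h => hij (hPuniq (h ▸ hxxP i hi) hyjP)
        have hyyj : yy i hi ≠ yj := fun h => hij (hPuniq (h ▸ hyyP i hi) hyjP)
        have hclique := part_clique hdiag hP hi0 (hxxP i hi) (hyyP i hi) (hxyne i hi)
        constructor
        · intro h
          rw [h] at hzR hnzxj
          have hMfalse : ¬ (M i j = true) := fun hh => hnzxj (hMij.2 hh)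
          have h3 := part_unif hR hzR hRxj (t := yy i hi)
            (Ne.symm (hxyne i hi)) hyxj hyyj
          exact hMfalse (hMij'.1 (h3.1.1 hclique.2))
        · intro h
          rw [h] at hzR hnzxj
          have hMfalse : ¬ (M i j = true) := fun hh => hnzxj (hMij'.2 hh)
          have h3 := part_unif hR hzR hRxj (t := xx i hi)
            (hxyne i hi) hxxj hxyj
          exact hMfalse (hMij.1 (h3.1.1 hclique.1))
      have hzw : z = w := by
        rcases hVenum z hzv with h | h | ⟨i, hi, h⟩
        · exact absurd h hzu
        · exact h
        · by_cases hij : i = j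
          · subst hij
            rcases h with h | h
            · exact absurd h hzxj
            · exact absurd h hzyj
          · rcases h with h | h
            · exact absurd h (hzpair i hi hij).1
            · exact absurd h (hzpair i hi hij).2
      rw [hzw] at hzR hnzxj hnxjz
      -- now w and xj are both in part 0 of R
      have hnuw : ¬ A u w := (hWadj w hwW).1
      have hnwu : ¬ A w u := (hWadj w hwW).2.1
      have hwxj : w ≠ xj := fun h => hj0 (hPuniq (h ▸ hwP) hxjP).symm
      have hunif := part_unif hR hzR hRxj (t := u) (Ne.symm hwu) hxju.symm hyju.symm
      -- hunif : (A u w ↔ A u xj) ∧ (A w u ↔ A xj u)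
      have hMcross1 : A u xj ↔ M 0 j = true := hP.2.2 0 j u hu0 xj hxjP (Ne.symm hxju)
      have hMcross2 : A xj u ↔ M j 0 = true := hP.2.2 j 0 xj hxjP u hu0 hxju
      refine ⟨⟨?_, ?_⟩, ?_⟩
      · rw [Bool.eq_false_iff]
        intro hh
        exact hnuw (hunif.1.2 (hMcross1.2 hh))
      · rw [Bool.eq_false_iff]
        intro hh
        exact hnwu (hunif.2.2 (hMcross2.2 hh))
      · intro i hi hij
        have hi0 : i ≠ 0 := (hmemI i).1 hi
        set xi := xx i hi with hxi
        have hxiP : xi ∈ P i := hxxP i hi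
        have hxiw : xi ≠ w := fun h => hi0 (hPuniq (h ▸ hxiP) hwP)
        have hxiu : xi ≠ u := fun h => hi0 (hPuniq (h ▸ hxiP) hu0)
        have hxiv : xi ≠ v := hPnv hxiP
        have hxixj : xi ≠ xj := fun h => hij (hPuniq (h ▸ hxiP) hxjP)
        have hxiyj : xi ≠ yj := fun h => hij (hPuniq (h ▸ hxiP) hyjP)
        have hunif2 := part_unif hR hzR hRxj (t := xi) hxiw hxixj hxiyj
        -- hunif2 : (A xi w ↔ A xi xj) ∧ (A w xi ↔ A xj xi)
        have hunifP := part_unif hP hwP hu0 (t := xi) hxiw hxiu hxiv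
        -- hunifP : (A xi w ↔ A xi u) ∧ (A w xi ↔ A u xi)
        constructor
        · refine boolext _ _ ?_
          calc M i j = true ↔ A xi xj := (hP.2.2 i j xi hxiP xj hxjP hxixj).symm
            _ ↔ A xi w := hunif2.1.symm
            _ ↔ A xi u := hunifP.1
            _ ↔ M i 0 = true := hP.2.2 i 0 xi hxiP u hu0 hxiu
        · refine boolext _ _ ?_
          calc M 0 i = true ↔ A u xi := (hP.2.2 0 i u hu0 xi hxiP (Ne.symm hxiu)).symm
            _ ↔ A w xi := hunifP.2.symm
            _ ↔ A xj xi := hunif2.2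
            _ ↔ M j i = true := hP.2.2 j i xj hxjP xi hxiP (Ne.symm hxixj)
    -- all off-diagonal entries of M vanish
    have hMoff : ∀ i j : Fin (1 + l), i ≠ j → M i j = false := by
      intro i j hij
      by_cases hi0 : i = 0
      · subst hi0
        exact (hMfacts j ((hmemI j).2 (Ne.symm hij))).1.1
      · have hiI := (hmemI i).2 hi0
        by_cases hj0 : j = 0
        · subst hj0
          exact (hMfacts i hiI).1.2
        · have hjI := (hmemI j).2 hj0
          rw [((hMfacts j hjI).2 i hiI hij).1]
          exact (hMfacts i hiI).1.2
    -- the deleted-w digraph now has no M-partition : pigeonhole on parts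
    obtain ⟨Q', hQ'⟩ := hobs.2 w
    have hQ'uniq : ∀ {i j : Fin (1 + l)} {z : V}, z ∈ Q' i → z ∈ Q' j → i = j := by
      intro i j z hi hj
      have hzw : z ≠ w := fun h => (hQ'.1 i hi) (by simp [h])
      exact ((hQ'.2.1 z (by simpa using hzw)).unique hi hj)
    have hsame : ∀ a b : V, a ≠ b → A a b → ∀ {i j : Fin (1 + l)},
        a ∈ Q' i → b ∈ Q' j → i = j ∧ i ≠ 0 := by
      intro a b hab hAab i j hai hbj
      have hij : i = j := by
        by_contra hij
        have := (hQ'.2.2 i j a hai b hbj hab).1 hAab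
        rw [hMoff i j hij] at this
        simp at this
      subst hij
      refine ⟨rfl, ?_⟩
      intro h0
      subst h0
      exact part0_indep hdiag hQ' hai hbj hab hAab
    set pvert : Fin (1 + l) → V :=
      fun k => if h : k = 0 then u else xx k ((hmemI k).2 h) with hpvert
    have hpP : ∀ k, pvert k ∈ P k := by
      intro k
      by_cases h : k = 0
      · subst h
        simp only [hpvert, dif_pos]
        exact hu0
      · simp only [hpvert, dif_neg h]
        exact hxxP k _
    have hpw : ∀ k, pvert k ≠ w := by
      intro k
      by_cases h : k = 0
      · subst h
        simp only [hpvert, dif_pos]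
        exact Ne.symm hwu
      · simp only [hpvert, dif_neg h]
        intro hh
        exact h (hPuniq (hh ▸ hxxP k ((hmemI k).2 h)) hwP)
    have hvert : ∀ k : Fin (1 + l), ∃ ik : Fin (1 + l), ik ≠ 0 ∧ pvert k ∈ Q' ik := by
      intro k
      by_cases h : k = 0
      · subst h
        obtain ⟨i, hi, -⟩ := hQ'.2.1 u (by simpa using Ne.symm hwu)
        obtain ⟨i', hi', -⟩ := hQ'.2.1 v (by simpa using Ne.symm hwv)
        obtain ⟨-, hne0⟩ := hsame u v huv.1 huv.2.1 hi hi'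
        refine ⟨i, hne0, ?_⟩
        simp only [hpvert, dif_pos]
        exact hi
      · have hkI : k ∈ I := (hmemI k).2 h
        have hxw : xx k hkI ≠ w := fun hh => h (hPuniq (hh ▸ hxxP k hkI) hwP)
        have hyw : yy k hkI ≠ w := fun hh => h (hPuniq (hh ▸ hyyP k hkI) hwP)
        obtain ⟨i, hi, -⟩ := hQ'.2.1 (xx k hkI) (by simpa using hxw)
        obtain ⟨i', hi', -⟩ := hQ'.2.1 (yy k hkI) (by simpa using hyw)
        have hcl := part_clique hdiag hP ((hmemI k).1 hkI) (hxxP k hkI) (hyyP k hkI) (hxyne k hkI)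
        obtain ⟨-, hne0⟩ := hsame _ _ (hxyne k hkI) hcl.1 hi hi'
        refine ⟨i, hne0, ?_⟩
        simp only [hpvert, dif_neg h]
        exact hi
    choose φ hφ0 hφmem using hvert
    have hφinj : ∀ k k' : Fin (1 + l), φ k = φ k' → k = k' := by
      intro k k' heq
      by_contra hkk'
      have hpp : pvert k ≠ pvert k' := by
        intro hh
        exact hkk' (hPuniq (hh ▸ hpP k) (hpP k'))
      have hmem' : pvert k' ∈ Q' (φ k) := heq ▸ hφmem k'
      have hcl := part_clique hdiag hQ' (hφ0 k) (hφmem k) hmem' hpp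
      have := (hP.2.2 k k' (pvert k) (hpP k) (pvert k') (hpP k') hpp).1 hcl.1
      rw [hMoff k k' hkk'] at this
      simp at this
    have hcardle : (Finset.univ : Finset (Fin (1 + l))).card ≤
        (Finset.univ.erase (0 : Fin (1 + l))).card := by
      refine Finset.card_le_card_of_injOn φ ?_ ?_
      · intro k _
        exact Finset.mem_erase.2 ⟨hφ0 k, Finset.mem_univ _⟩
      · intro a _ b _ h
        exact hφinj a b h
    rw [Finset.card_univ, Fintype.card_fin,
      Finset.card_erase_of_mem (Finset.mem_univ _), Finset.card_univ, Fintype.card_fin] at hcardle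
    omega
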